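/- Fix n ≥ 1, b ∈ {1,…,n}, σ ≥ 0, σ₀ > 0, and a diagonal matrix D = diag(d_1,…,d_n) with d_1 ≥ d_2 ≥ … ≥ d_n ≥ 0, and let g be the density on ℝⁿ of the multivariate Gaussian distribution N(0, σ²D + σ₀²I_n). Fix a vector w ∈ ℝⁿ, let M(n,b) be the set of permutations ψ of {1,…,n} with ψ(i) = i for all i ≤ n−b, and for ψ ∈ M(n,b) write w_ψ = (w_{ψ(1)},…,w_{ψ(n)})ᵀ. Let ν be the probability measure on M(n,b) with ν({ψ}) = g(w_ψ)/Σ_{φ∈M(n,b)} g(w_φ), and let ν₀ be the uniform probability measure on M(n,b). Then ‖ν − ν₀‖_TV ≤ (e^{Δ̄} − 1)/2, where Δ̄ = [d_a·σ² / (2σ₀²(σ²d_a + σ₀²))]·Σ_{j=a}^n w_j² with a = n − b + 1. -/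
import Mathlib

open MeasureTheory ProbabilityTheory

noncomputable section

namespace PPT

/-- The set `M(n,b)` of permutations of `{0, …, n-1}` keeping the first `n - b` elements fixed. -/
def permSet (n b : ℕ) : Finset (Equiv.Perm (Fin n)) :=
  Finset.univ.filter fun ψ => ∀ i : Fin n, (i : ℕ) < n - b → ψ i = i

theorem mem_permSet {n b : ℕ} {ψ : Equiv.Perm (Fin n)} :
    ψ ∈ permSet n b ↔ ∀ i : Fin n, (i : ℕ) < n - b → ψ i = i := by
  simp [permSet]

/-- reindexing sums over the tail by a permutation in `permSet`. -/
theorem sum_tail_comp {n b : ℕ} {ψ : Equiv.Perm (Fin n)} (hψ : ψ ∈ permSet n b)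
    (f : Fin n → ℝ) :
    ∑ j ∈ Finset.univ.filter (fun j : Fin n => n - b ≤ (j : ℕ)), f (ψ j)
      = ∑ j ∈ Finset.univ.filter (fun j : Fin n => n - b ≤ (j : ℕ)), f j := by
  rw [mem_permSet] at hψ
  apply Finset.sum_nbij' (i := fun j => ψ j) (j := fun j => ψ.symm j)
  · intro j hj
    simp only [Finset.mem_filter, Finset.mem_univ, true_and] at hj ⊢
    by_contra hc
    push_neg at hc
    have := hψ (ψ j) hc
    have : ψ j = j := ψ.injective this
    omega
  · intro j hj
    simp only [Finset.mem_filter, Finset.mem_univ, true_and] at hj ⊢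
    by_contra hc
    push_neg at hc
    have h1 := hψ (ψ.symm j) hc
    rw [Equiv.apply_symm_apply] at h1
    rw [← h1] at hc
    omega
  all_goals simp

end PPT

open PPT in
/-- Lemma A4: total variation bound between the permutation measure tilted
by the Gaussian density `g` of `N(0, σ²D + σ₀²Iₙ)` and the uniform measure on the permutation
set `M(n,b)`:  `‖ν − ν₀‖_TV ≤ (e^{Δ̄} − 1)/2` with
`Δ̄ = d_a σ² / (2σ₀²(σ²d_a + σ₀²)) · Σ_{j=a}^n w_j²`, `a = n − b + 1`. -/
theorem tv_bound_tilted_permutation_measure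
    {n : ℕ} (hn : 1 ≤ n) (b : ℕ) (hb1 : 1 ≤ b) (hb2 : b ≤ n)
    (σ σ0 : ℝ) (hσ : 0 ≤ σ) (hσ0 : 0 < σ0)
    -- the diagonal of D, nonincreasing and nonnegative
    (dvec : Fin n → ℝ)
    (hd_mono : ∀ i j : Fin n, i ≤ j → dvec j ≤ dvec i) (hd_nonneg : ∀ i, 0 ≤ dvec i)
    -- the density of N(0, σ²D + σ₀²Iₙ)
    (g : (Fin n → ℝ) → ℝ)
    (hg : ∀ x, g x = (2 * Real.pi) ^ (-(n : ℝ) / 2) *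
      ∏ j, ((σ ^ 2 * dvec j + σ0 ^ 2) ^ (-(1 : ℝ) / 2) *
        Real.exp (-(x j ^ 2) / (2 * (σ ^ 2 * dvec j + σ0 ^ 2)))))
    -- the observed vector w
    (w : Fin n → ℝ)
    -- Δ̄ (with the index a = n − b + 1, i.e. position n − b in 0-based indexing)
    (Δ : ℝ)
    (hΔ : Δ = (dvec ⟨n - b, by omega⟩ * σ ^ 2 /
        (2 * σ0 ^ 2 * (σ ^ 2 * dvec ⟨n - b, by omega⟩ + σ0 ^ 2))) *
      ∑ j ∈ Finset.univ.filter (fun j : Fin n => n - b ≤ (j : ℕ)), w j ^ 2) :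
    -- total variation distance between ν({ψ}) ∝ g(w_ψ) and the uniform measure ν₀ on M(n,b)
    (1 / 2) * ∑ ψ ∈ permSet n b,
        |g (w ∘ ψ) / (∑ φ ∈ permSet n b, g (w ∘ φ)) - ((permSet n b).card : ℝ)⁻¹| ≤
      (Real.exp Δ - 1) / 2 := by
  classical
  set a : Fin n := ⟨n - b, by omega⟩ with ha
  set T : Finset (Fin n) := Finset.univ.filter (fun j : Fin n => n - b ≤ (j : ℕ)) with hT
  set c : Fin n → ℝ := fun j => σ ^ 2 * dvec j + σ0 ^ 2 with hc
  have hcpos : ∀ j, 0 < c j := by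
    intro j
    have := hd_nonneg j
    simp only [hc]
    positivity
  have hclb : ∀ j, σ0 ^ 2 ≤ c j := by
    intro j
    have h1 := hd_nonneg j
    have h2 : 0 ≤ σ ^ 2 := sq_nonneg σ
    simp only [hc]
    nlinarith
  have hcub : ∀ j ∈ T, c j ≤ c a := by
    intro j hj
    simp only [hT, Finset.mem_filter, Finset.mem_univ, true_and] at hj
    have haj : a ≤ j := by
      rw [Fin.le_def]
      exact hj
    have := hd_mono a j haj
    have h2 : 0 ≤ σ ^ 2 := sq_nonneg σ
    simp only [hc]
    nlinarith
  -- energy and closed form of g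
  set E : Equiv.Perm (Fin n) → ℝ := fun ψ => ∑ j, w (ψ j) ^ 2 / (2 * c j) with hE
  set K : ℝ := (2 * Real.pi) ^ (-(n : ℝ) / 2) * ∏ j, (c j) ^ (-(1 : ℝ) / 2) with hK
  have hKpos : 0 < K := by
    rw [hK]
    apply mul_pos
    · apply Real.rpow_pos_of_pos
      positivity
    · apply Finset.prod_pos
      intro j _
      exact Real.rpow_pos_of_pos (hcpos j) _
  have hgE : ∀ ψ : Equiv.Perm (Fin n), g (w ∘ ψ) = K * Real.exp (-(E ψ)) := by
    intro ψ
    rw [hg, Finset.prod_mul_distrib, hK, mul_assoc]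
    congr 1
    have hEψ : E ψ = ∑ j, w (ψ j) ^ 2 / (2 * c j) := by rw [hE]
    congr 1
    rw [← Real.exp_sum, Real.exp_eq_exp, hEψ, ← Finset.sum_neg_distrib]
    apply Finset.sum_congr rfl
    intro j _
    simp [neg_div, Function.comp, hc]
  have hgpos : ∀ ψ : Equiv.Perm (Fin n), 0 < g (w ∘ ψ) := by
    intro ψ
    rw [hgE]
    positivity
  -- Δ is nonnegative
  have hΔ0 : 0 ≤ Δ := by
    rw [hΔ]
    apply mul_nonneg
    · apply div_nonneg
      · exact mul_nonneg (hd_nonneg _) (sq_nonneg σ)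
      · have h1 := hd_nonneg (⟨n - b, by omega⟩ : Fin n)
        have h2 : (0:ℝ) ≤ σ ^ 2 * dvec ⟨n - b, by omega⟩ + σ0 ^ 2 :=
          add_nonneg (mul_nonneg (sq_nonneg σ) h1) (sq_nonneg σ0)
        exact mul_nonneg (by positivity) h2
    · exact Finset.sum_nonneg fun j _ => sq_nonneg _
  -- key energy bound
  have hkeyE : ∀ ψ ∈ permSet n b, ∀ φ ∈ permSet n b, E φ - E ψ ≤ Δ := by
    intro ψ hψ φ hφ
    have hsplit : ∀ χ : Equiv.Perm (Fin n), χ ∈ permSet n b →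
        E χ = (∑ j ∈ T, w (χ j) ^ 2 / (2 * c j)) +
          ∑ j ∈ Finset.univ.filter (fun j : Fin n => ¬ (n - b ≤ (j : ℕ))),
            w j ^ 2 / (2 * c j) := by
      intro χ hχ
      simp only [hE]
      rw [← Finset.sum_filter_add_sum_filter_not Finset.univ (fun j : Fin n => n - b ≤ (j : ℕ))]
      congr 1
      apply Finset.sum_congr rfl
      intro j hj
      simp only [Finset.mem_filter, Finset.mem_univ, true_and, not_le] at hj
      rw [mem_permSet] at hχ
      rw [hχ j hj]
    rw [hsplit ψ hψ, hsplit φ hφ]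
    have hub : ∑ j ∈ T, w (φ j) ^ 2 / (2 * c j) ≤ (∑ j ∈ T, w j ^ 2) / (2 * σ0 ^ 2) := by
      calc ∑ j ∈ T, w (φ j) ^ 2 / (2 * c j)
          ≤ ∑ j ∈ T, w (φ j) ^ 2 / (2 * σ0 ^ 2) := by
            apply Finset.sum_le_sum
            intro j hj
            apply div_le_div_of_nonneg_left (sq_nonneg _) (by positivity)
            have := hclb j
            linarith
        _ = (∑ j ∈ T, w j ^ 2) / (2 * σ0 ^ 2) := by
            rw [← Finset.sum_div]
            congr 1
            exact sum_tail_comp hφ (fun j => w j ^ 2)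
    have hlb : (∑ j ∈ T, w j ^ 2) / (2 * c a) ≤ ∑ j ∈ T, w (ψ j) ^ 2 / (2 * c j) := by
      calc (∑ j ∈ T, w j ^ 2) / (2 * c a)
          = ∑ j ∈ T, w (ψ j) ^ 2 / (2 * c a) := by
            rw [← Finset.sum_div]
            congr 1
            exact (sum_tail_comp hψ (fun j => w j ^ 2)).symm
        _ ≤ ∑ j ∈ T, w (ψ j) ^ 2 / (2 * c j) := by
            apply Finset.sum_le_sum
            intro j hj
            apply div_le_div_of_nonneg_left (sq_nonneg _) (by linarith [hcpos j])
            have := hcub j hj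
            linarith
    have hΔeq : Δ = (∑ j ∈ T, w j ^ 2) / (2 * σ0 ^ 2) - (∑ j ∈ T, w j ^ 2) / (2 * c a) := by
      rw [hΔ]
      have hca : c a = σ ^ 2 * dvec a + σ0 ^ 2 := rfl
      have h1 : (0:ℝ) < c a := hcpos a
      have h2 : dvec (⟨n - b, by omega⟩ : Fin n) = dvec a := rfl
      have h3 : (σ ^ 2 * dvec (⟨n - b, by omega⟩ : Fin n) + σ0 ^ 2) = c a := rfl
      rw [h2, h3]
      field_simp
      ring
    linarith
  -- the key ratio bound between unnormalized weights
  have hkey : ∀ ψ ∈ permSet n b, ∀ φ ∈ permSet n b,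
      g (w ∘ ψ) ≤ Real.exp Δ * g (w ∘ φ) := by
    intro ψ hψ φ hφ
    rw [hgE, hgE]
    have hre : Real.exp Δ * (K * Real.exp (-(E φ))) = K * Real.exp (Δ + -(E φ)) := by
      rw [Real.exp_add]; ring
    rw [hre]
    apply mul_le_mul_of_nonneg_left _ hKpos.le
    apply Real.exp_le_exp.mpr
    have := hkeyE ψ hψ φ hφ
    linarith
  -- finishing: set up the normalization
  set S : Finset (Equiv.Perm (Fin n)) := permSet n b with hS
  have hone : (1 : Equiv.Perm (Fin n)) ∈ S := by
    rw [hS, mem_permSet]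
    intro i _
    rfl
  have hNpos : 0 < (S.card : ℝ) := by
    have : 0 < S.card := Finset.card_pos.mpr ⟨1, hone⟩
    exact_mod_cast this
  set Sf : ℝ := ∑ φ ∈ S, g (w ∘ φ) with hSf
  have hSfpos : 0 < Sf := Finset.sum_pos (fun φ _ => hgpos φ) ⟨1, hone⟩
  set x : ℝ := Real.exp Δ with hx
  have hx1 : 1 ≤ x := Real.one_le_exp hΔ0
  have hx0 : 0 < x := Real.exp_pos Δ
  -- pointwise bound on each term
  have hpt : ∀ ψ ∈ S, |g (w ∘ ψ) / Sf - (S.card : ℝ)⁻¹| ≤ (x - 1) * (S.card : ℝ)⁻¹ := by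
    intro ψ hψ
    have h1 : g (w ∘ ψ) * S.card ≤ x * Sf := by
      have : ∀ φ ∈ S, g (w ∘ ψ) ≤ x * g (w ∘ φ) := fun φ hφ => hkey ψ hψ φ hφ
      calc g (w ∘ ψ) * S.card = ∑ _φ ∈ S, g (w ∘ ψ) := by
            rw [Finset.sum_const, nsmul_eq_mul, mul_comm]
        _ ≤ ∑ φ ∈ S, x * g (w ∘ φ) := Finset.sum_le_sum this
        _ = x * Sf := by rw [← Finset.mul_sum]
    have h2 : Sf ≤ x * (g (w ∘ ψ) * S.card) := by
      have : ∀ φ ∈ S, g (w ∘ φ) ≤ x * g (w ∘ ψ) := fun φ hφ => hkey φ hφ ψ hψ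
      calc Sf ≤ ∑ _φ ∈ S, x * g (w ∘ ψ) := Finset.sum_le_sum this
        _ = x * (g (w ∘ ψ) * S.card) := by
            rw [Finset.sum_const, nsmul_eq_mul]; ring
    set u : ℝ := g (w ∘ ψ) / Sf with hu
    set t : ℝ := (S.card : ℝ)⁻¹ with ht
    have ht0 : 0 < t := by rw [ht]; exact inv_pos.mpr hNpos
    have hu0 : 0 ≤ u := by
      apply div_nonneg (hgpos ψ).le hSfpos.le
    have hub : u ≤ x * t := by
      rw [hu, ht, div_le_iff₀ hSfpos]
      have hcc : (S.card : ℝ) * (S.card : ℝ)⁻¹ = 1 := mul_inv_cancel₀ hNpos.ne'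
      calc g (w ∘ ψ) = g (w ∘ ψ) * ((S.card : ℝ) * (S.card : ℝ)⁻¹) := by
            rw [hcc, mul_one]
        _ = g (w ∘ ψ) * (S.card : ℝ) * (S.card : ℝ)⁻¹ := by ring
        _ ≤ x * Sf * (S.card : ℝ)⁻¹ :=
            mul_le_mul_of_nonneg_right h1 (inv_nonneg.mpr hNpos.le)
        _ = x * (S.card : ℝ)⁻¹ * Sf := by ring
    have hlb : t ≤ x * u := by
      have hNt : (S.card : ℝ) * t = 1 := by
        rw [ht]; exact mul_inv_cancel₀ hNpos.ne'
      have h3 : Sf * t ≤ x * g (w ∘ ψ) := by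
        calc Sf * t ≤ x * (g (w ∘ ψ) * S.card) * t :=
              mul_le_mul_of_nonneg_right h2 ht0.le
          _ = x * g (w ∘ ψ) * ((S.card : ℝ) * t) := by ring
          _ = x * g (w ∘ ψ) := by rw [hNt, mul_one]
      have hxu : x * u = (x * g (w ∘ ψ)) / Sf := by
        rw [hu]; ring
      rw [hxu, le_div_iff₀ hSfpos]
      linarith [h3]
    rw [abs_le]
    constructor
    · nlinarith [mul_nonneg ht0.le (sq_nonneg (x - 1))]
    · linarith [hub]
  calc (1 / 2) * ∑ ψ ∈ S, |g (w ∘ ψ) / Sf - (S.card : ℝ)⁻¹|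
      ≤ (1 / 2) * ∑ _ψ ∈ S, (x - 1) * (S.card : ℝ)⁻¹ := by
        apply mul_le_mul_of_nonneg_left (Finset.sum_le_sum hpt) (by norm_num)
    _ = (1 / 2) * ((x - 1) * ((S.card : ℝ) * (S.card : ℝ)⁻¹)) := by
        rw [Finset.sum_const, nsmul_eq_mul]; ring
    _ = (x - 1) / 2 := by
        rw [mul_inv_cancel₀ hNpos.ne']; ring
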